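/- Let u = (u_0,...,u_n) and ū = (ū_0,...,ū_n) be points of the unit simplex in ℝ^{n+1} (u_i, ū_i ≥ 0, ∑ u_i = ∑ ū_i = 1) with ū_i > 0 for all i. Then ∑_{i=0}^n u_i log(u_i/ū_i) ≥ (1/2) ∑_{i=0}^n (u_i − ū_i)², where terms with u_i = 0 are interpreted as 0. -/

import Mathlib

open Finset

private lemma hasDerivAt_F (v : ℝ) {x : ℝ} (hx : x ≠ 0) :
    HasDerivAt (fun x => x * Real.log x - x * Real.log v - (x - v) - (x - v) ^ 2 / 2)
      (Real.log x - Real.log v - (x - v)) x := by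
  have h1 := Real.hasDerivAt_mul_log hx
  have h2 : HasDerivAt (fun x : ℝ => x * Real.log v) (Real.log v) x := by
    simpa using (hasDerivAt_id x).mul_const (Real.log v)
  have h3 : HasDerivAt (fun x : ℝ => x - v) 1 x := (hasDerivAt_id x).sub_const v
  have h4 : HasDerivAt (fun x : ℝ => (x - v) ^ 2 / 2) (x - v) x := by
    have := (h3.pow 2).div_const 2
    exact this.congr_deriv (by ring)
  have := ((h1.sub h2).sub h3).sub h4
  exact this.congr_deriv (by ring)

private lemma pt_ineq (u v : ℝ) (hu0 : 0 ≤ u) (hu1 : u ≤ 1) (hv0 : 0 < v) (hv1 : v ≤ 1) :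
    u * Real.log (u / v) ≥ (u - v) + (u - v) ^ 2 / 2 := by
  rcases eq_or_lt_of_le hu0 with h0 | h0
  · simp only [← h0, zero_mul]
    nlinarith
  set F : ℝ → ℝ := fun x => x * Real.log x - x * Real.log v - (x - v) - (x - v) ^ 2 / 2 with hF
  have hFv : F v = 0 := by simp [hF]
  have hcont : Continuous F := by
    apply (((Real.continuous_mul_log).sub (continuous_id.mul continuous_const)).sub
      (continuous_id.sub continuous_const)).sub
    continuity
  have key : 0 ≤ F u := by
    rcases le_total u v with huv | huv
    · -- antitone on [u, v]
      have hanti : AntitoneOn F (Set.Icc u v) := by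
        apply antitoneOn_of_deriv_nonpos (convex_Icc u v) hcont.continuousOn
        · intro x hx
          rw [interior_Icc] at hx
          exact (hasDerivAt_F v (ne_of_gt (lt_trans h0 hx.1))).differentiableAt.differentiableWithinAt
        · intro x hx
          rw [interior_Icc] at hx
          have hx0 : 0 < x := lt_trans h0 hx.1
          rw [(hasDerivAt_F v (ne_of_gt hx0)).deriv]
          have hlog : Real.log x - Real.log v ≤ x / v - 1 := by
            rw [← Real.log_div (ne_of_gt hx0) (ne_of_gt hv0)]
            exact Real.log_le_sub_one_of_pos (div_pos hx0 hv0)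
          have : x / v - 1 = (x - v) / v := by field_simp
          rw [this] at hlog
          have h2 : (x - v) / v ≤ x - v := by
            rw [div_le_iff₀ hv0]
            nlinarith [hx.2, hv0]
          linarith
      have := hanti (Set.mem_Icc.2 ⟨le_refl u, huv⟩) (Set.mem_Icc.2 ⟨huv, le_refl v⟩) huv
      rw [hFv] at this
      exact this
    · -- monotone on [v, u]
      have hmono : MonotoneOn F (Set.Icc v u) := by
        apply monotoneOn_of_deriv_nonneg (convex_Icc v u) hcont.continuousOn
        · intro x hx
          rw [interior_Icc] at hx
          exact (hasDerivAt_F v (ne_of_gt (lt_trans hv0 hx.1))).differentiableAt.differentiableWithinAt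
        · intro x hx
          rw [interior_Icc] at hx
          have hx0 : 0 < x := lt_trans hv0 hx.1
          rw [(hasDerivAt_F v (ne_of_gt hx0)).deriv]
          have hlog : Real.log v - Real.log x ≤ v / x - 1 := by
            rw [← Real.log_div (ne_of_gt hv0) (ne_of_gt hx0)]
            exact Real.log_le_sub_one_of_pos (div_pos hv0 hx0)
          have h2 : v / x - 1 = (v - x) / x := by field_simp
          rw [h2] at hlog
          have h3 : (v - x) / x ≤ v - x := by
            rw [div_le_iff₀ hx0]
            nlinarith [mul_nonneg (sub_nonneg.2 hx.1.le) (sub_nonneg.2 (hx.2.le.trans hu1))]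
          linarith
      have := hmono (Set.mem_Icc.2 ⟨le_refl v, huv⟩) (Set.mem_Icc.2 ⟨huv, le_refl u⟩) huv
      rw [hFv] at this
      exact this
  have hlogdiv : Real.log (u / v) = Real.log u - Real.log v :=
    Real.log_div (ne_of_gt h0) (ne_of_gt hv0)
  rw [hlogdiv]
  simp only [hF] at key
  nlinarith [key]

theorem csiszar_kullback_simplex (n : ℕ) (u ubar : Fin (n+1) → ℝ)
    (hu : ∀ i, 0 ≤ u i) (hubar : ∀ i, 0 < ubar i)
    (hsum : ∑ i, u i = 1) (hsumbar : ∑ i, ubar i = 1) :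
    ∑ i, u i * Real.log (u i / ubar i) ≥ (1/2) * ∑ i, (u i - ubar i) ^ 2 := by
  have hu1 : ∀ i, u i ≤ 1 := by
    intro i
    rw [← hsum]
    exact Finset.single_le_sum (fun j _ => hu j) (Finset.mem_univ i)
  have hubar1 : ∀ i, ubar i ≤ 1 := by
    intro i
    rw [← hsumbar]
    exact Finset.single_le_sum (fun j _ => (hubar j).le) (Finset.mem_univ i)
  have key : ∀ i, u i * Real.log (u i / ubar i) ≥ (u i - ubar i) + (u i - ubar i) ^ 2 / 2 :=
    fun i => pt_ineq (u i) (ubar i) (hu i) (hu1 i) (hubar i) (hubar1 i)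
  have hsum2 : ∑ i, ((u i - ubar i) + (u i - ubar i) ^ 2 / 2)
      ≤ ∑ i, u i * Real.log (u i / ubar i) :=
    Finset.sum_le_sum (fun i _ => key i)
  have hzero : ∑ i, (u i - ubar i) = 0 := by
    rw [Finset.sum_sub_distrib, hsum, hsumbar]; ring
  rw [Finset.sum_add_distrib, hzero] at hsum2
  calc (1/2) * ∑ i, (u i - ubar i) ^ 2 = ∑ i, (u i - ubar i) ^ 2 / 2 := by
        rw [Finset.mul_sum]; exact Finset.sum_congr rfl (fun i _ => by ring)
    _ ≤ ∑ i, u i * Real.log (u i / ubar i) := by linarith [hsum2]
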